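/- Let a, b, n be positive reals with n ≥ 2, and suppose a sequence satisfies s₀ = n and s_{i+1} ≥ s_i/2 − √(s_i · log s_i) with s_i ≥ 4. If s_{i−1} ≥ n/2^{i−1} − 8·√((n/2^{i−1})·log(n/2^{i−1})), then s_i ≥ n/2^i − 8·√((n/2^i)·log(n/2^i)), provided log(n/2^i) ≥ log 2 and n/2^i is large enough that 5√2·√((n/2^i)(log(n/2^i)+log 2)) ≤ 8√((n/2^i)·log(n/2^i)). -/

import Mathlib

open Real

set_option maxHeartbeats 1000000

/-- Inductive step for cluster sizes under almost-equal random splits: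
halving with additive deviation `√(s log s)` keeps `s i` within
`8√((n/2^i)·log(n/2^i))` of `n/2^i`. -/
theorem almost_equal_split_induction (n : ℝ) (s : ℕ → ℝ) (i : ℕ)
    (hn : 2 ≤ n) (hi : 1 ≤ i) (hs0 : s 0 = n)
    (hs4 : 4 ≤ s (i - 1))
    (hrec : s (i - 1) / 2 - Real.sqrt (s (i - 1) * Real.log (s (i - 1))) ≤ s i)
    (hprev : n / 2 ^ (i - 1) -
        8 * Real.sqrt ((n / 2 ^ (i - 1)) * Real.log (n / 2 ^ (i - 1)))
      ≤ s (i - 1))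
    (hlog : Real.log 2 ≤ Real.log (n / 2 ^ i))
    (htech : 5 * Real.sqrt 2 *
        Real.sqrt ((n / 2 ^ i) * (Real.log (n / 2 ^ i) + Real.log 2))
      ≤ 8 * Real.sqrt ((n / 2 ^ i) * Real.log (n / 2 ^ i))) :
    n / 2 ^ i - 8 * Real.sqrt ((n / 2 ^ i) * Real.log (n / 2 ^ i)) ≤ s i := by
  obtain ⟨j, rfl⟩ : ∃ j, i = j + 1 := ⟨i - 1, by omega⟩
  simp only [Nat.add_sub_cancel] at hs4 hrec hprev
  set x : ℝ := n / 2 ^ (j + 1) with hxdef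
  set t : ℝ := s j with htdef
  have hxpos : 0 < x := by
    apply div_pos (by linarith) (by positivity)
  have hx2 : 2 ≤ x := (Real.log_le_log_iff (by norm_num) hxpos).mp hlog
  have hm : n / 2 ^ j = 2 * x := by
    rw [hxdef, pow_succ]; ring
  set m : ℝ := 2 * x with hmdef
  have hm4 : (4 : ℝ) ≤ m := by linarith
  rw [hm] at hprev
  set S : ℝ := Real.sqrt (m * Real.log m) with hSdef
  have hmpos : (0 : ℝ) < m := by linarith
  have hlm1 : 1 ≤ Real.log m := by
    rw [Real.le_log_iff_exp_le hmpos]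
    have := Real.exp_one_lt_d9
    linarith
  have hS0 : 0 ≤ S := Real.sqrt_nonneg _
  have hS2 : S ^ 2 = m * Real.log m := Real.sq_sqrt (by nlinarith)
  -- key: s (j+1) ≥ x - 5 S
  have hkey : x - 5 * S ≤ s (j + 1) := by
    have htpos : (0 : ℝ) < t := by linarith
    rcases le_total t m with hcase | hcase
    · -- t ≤ m : use monotonicity of t log t
      have h1 : Real.sqrt (t * Real.log t) ≤ S := by
        apply Real.sqrt_le_sqrt
        have hlt : Real.log t ≤ Real.log m := Real.log_le_log htpos hcase
        have hlt0 : 0 ≤ Real.log t := Real.log_nonneg (by linarith)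
        nlinarith
      linarith [hprev, hrec]
    · -- m ≤ t : squaring argument
      have hsm : Real.sqrt m ≤ S := by
        apply Real.sqrt_le_sqrt; nlinarith
      have hsm2 : 2 ≤ Real.sqrt m := by
        have : Real.sqrt 4 ≤ Real.sqrt m := Real.sqrt_le_sqrt hm4
        rwa [show (4:ℝ) = 2^2 by norm_num, Real.sqrt_sq (by norm_num)] at this
      have hlogm_sq : Real.log m ≤ 2 * Real.sqrt m - 2 := by
        have h1 : Real.log (Real.sqrt m) ≤ Real.sqrt m - 1 :=
          Real.log_le_sub_one_of_pos (by positivity)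
        have h2 : Real.log (Real.sqrt m) = Real.log m / 2 :=
          Real.log_sqrt hmpos.le
        linarith
      have hlogkey : Real.log m + 1 ≤ 5 * S := by nlinarith
      -- log t ≤ log m + (t - m)/m, stated multiplied by m
      have hlogt : m * Real.log t ≤ m * Real.log m + (t - m) := by
        have h1 : Real.log (t / m) ≤ t / m - 1 :=
          Real.log_le_sub_one_of_pos (by positivity)
        have h2 : Real.log (t / m) = Real.log t - Real.log m :=
          Real.log_div (by linarith) (by linarith)
        have h3 : Real.log t - Real.log m ≤ t / m - 1 := by linarith
        have h4 := mul_le_mul_of_nonneg_left h3 hmpos.le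
        have h5 : m * (t / m - 1) = t - m := by field_simp
        linarith [h4, h5.le]
      have hsqrtle : Real.sqrt (t * Real.log t) ≤ (t - m) / 2 + 5 * S := by
        rw [Real.sqrt_le_left (by nlinarith)]
        have h6 := mul_le_mul_of_nonneg_left hlogt htpos.le
        -- t * (m * log t) ≤ t * (m * log m + (t - m))
        have hd : 0 ≤ t - m := by linarith
        rw [show ((t - m) / 2 + 5 * S) ^ 2
            = (t - m)^2/4 + 5 * (t - m) * S + 25 * S^2 by ring]
        rw [hS2]
        -- multiply target by m
        rw [← mul_le_mul_iff_of_pos_left hmpos]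
        have hA : 0 ≤ (m - 4) * (t - m)^2 :=
          mul_nonneg (by linarith) (sq_nonneg _)
        have hB : 0 ≤ m * (t - m) * (5 * S - (Real.log m + 1)) :=
          mul_nonneg (mul_nonneg hmpos.le hd) (by linarith)
        have hC : 0 ≤ m^2 * Real.log m :=
          mul_nonneg (by positivity) (by linarith)
        nlinarith [h6, hA, hB, hC]
      linarith [hrec]
  -- now 5 S ≤ 8 sqrt (x log x)
  have h5S : 5 * S ≤ 8 * Real.sqrt (x * Real.log x) := by
    have hlog2x : Real.log m = Real.log 2 + Real.log x := by
      rw [hmdef, Real.log_mul (by norm_num) (ne_of_gt hxpos)]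
    have hSval : S = Real.sqrt 2 * Real.sqrt (x * (Real.log x + Real.log 2)) := by
      rw [hSdef, hlog2x, show m * (Real.log 2 + Real.log x)
          = 2 * (x * (Real.log x + Real.log 2)) by rw [hmdef]; ring,
        Real.sqrt_mul (by norm_num)]
    rw [hSval]
    calc 5 * (Real.sqrt 2 * Real.sqrt (x * (Real.log x + Real.log 2)))
        = 5 * Real.sqrt 2 * Real.sqrt (x * (Real.log x + Real.log 2)) := by ring
      _ ≤ 8 * Real.sqrt (x * Real.log x) := htech
  linarith
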